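/- arXiv:2203.17028 — 2 statements merged into one kernel-verified Lean document; each statement's English description precedes it below -/
import Mathlib

section
/- Define v² = Σ_{t=1}^T (2γ_t²/ξ_t)·max_i η_t(i) and R(ε,δ) = (√(ε + [C^{-1}(1/δ)]²) − C^{-1}(1/δ))², where C(x) = √π x e^{x²}. If 2v² ≤ R(ε,δ), then ε/2 − v² ≥ v·C^{-1}(1/δ), and consequently the Gaussian-mechanism privacy loss with variance proxy v² satisfies P(|L| > ε) ≤ δ. -/
open ProbabilityTheory Real MeasureTheory Filter

lemma aux_int_x_exp (v a : ℝ) (hv : 0 < v) (ha : 0 ≤ a) :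
    ∫ x in Set.Ioi a, x * Real.exp (-x ^ 2 / (2 * v)) = v * Real.exp (-a ^ 2 / (2 * v)) := by
  have hderiv : ∀ x ∈ Set.Ioi a, HasDerivAt (fun x : ℝ => -v * Real.exp (-x ^ 2 / (2 * v)))
      (x * Real.exp (-x ^ 2 / (2 * v))) x := by
    intro x _
    have h1 : HasDerivAt (fun x : ℝ => -x ^ 2 / (2 * v)) (-(2 * x ^ 1) / (2 * v)) x :=
      ((hasDerivAt_pow 2 x).neg).div_const (2 * v)
    have h2 := (h1.exp).const_mul (-v)
    convert h2 using 1
    · rfl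
    · rfl
    field_simp
  have hcont : ContinuousWithinAt (fun x : ℝ => -v * Real.exp (-x ^ 2 / (2 * v)))
      (Set.Ici a) a := by
    apply Continuous.continuousWithinAt
    continuity
  have hpos : ∀ x ∈ Set.Ioi a, 0 ≤ x * Real.exp (-x ^ 2 / (2 * v)) := by
    intro x hx
    have : 0 < x := lt_of_le_of_lt ha hx
    positivity
  have htend : Tendsto (fun x : ℝ => -v * Real.exp (-x ^ 2 / (2 * v))) atTop (nhds 0) := by
    have h1 : Tendsto (fun x : ℝ => -x ^ 2 / (2 * v)) atTop atBot := by
      apply Tendsto.atBot_div_const (by positivity)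
      exact tendsto_neg_atBot_iff.2 (tendsto_pow_atTop two_ne_zero)
    have h2 : Tendsto (fun x : ℝ => Real.exp (-x ^ 2 / (2 * v))) atTop (nhds 0) :=
      Real.tendsto_exp_atBot.comp h1
    have := h2.const_mul (-v)
    simpa using this
  have := integral_Ioi_of_hasDerivAt_of_nonneg hcont hderiv hpos htend
  rw [this]
  ring

lemma aux_int_x_exp_integrable (v a : ℝ) (hv : 0 < v) (ha : 0 ≤ a) :
    IntegrableOn (fun x : ℝ => x * Real.exp (-x ^ 2 / (2 * v))) (Set.Ioi a) := by
  have hderiv : ∀ x ∈ Set.Ioi a, HasDerivAt (fun x : ℝ => -v * Real.exp (-x ^ 2 / (2 * v)))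
      (x * Real.exp (-x ^ 2 / (2 * v))) x := by
    intro x _
    have h1 : HasDerivAt (fun x : ℝ => -x ^ 2 / (2 * v)) (-(2 * x ^ 1) / (2 * v)) x :=
      ((hasDerivAt_pow 2 x).neg).div_const (2 * v)
    have h2 := (h1.exp).const_mul (-v)
    convert h2 using 1
    · rfl
    · rfl
    field_simp
  have hcont : ContinuousWithinAt (fun x : ℝ => -v * Real.exp (-x ^ 2 / (2 * v)))
      (Set.Ici a) a := by
    apply Continuous.continuousWithinAt
    continuity
  have hpos : ∀ x ∈ Set.Ioi a, 0 ≤ x * Real.exp (-x ^ 2 / (2 * v)) := by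
    intro x hx
    have : 0 < x := lt_of_le_of_lt ha hx
    positivity
  have htend : Tendsto (fun x : ℝ => -v * Real.exp (-x ^ 2 / (2 * v))) atTop (nhds 0) := by
    have h1 : Tendsto (fun x : ℝ => -x ^ 2 / (2 * v)) atTop atBot := by
      apply Tendsto.atBot_div_const (by positivity)
      exact tendsto_neg_atBot_iff.2 (tendsto_pow_atTop two_ne_zero)
    have h2 : Tendsto (fun x : ℝ => Real.exp (-x ^ 2 / (2 * v))) atTop (nhds 0) :=
      Real.tendsto_exp_atBot.comp h1
    have := h2.const_mul (-v)
    simpa using this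
  exact integrableOn_Ioi_deriv_of_nonneg hcont hderiv hpos htend

lemma aux_gauss_tail (v : NNReal) (hv : 0 < (v : ℝ)) (a : ℝ) (ha : 0 < a) :
    ∫ x in Set.Ioi a, gaussianPDFReal 0 v x
      ≤ (v : ℝ) / (a * Real.sqrt (2 * π * v)) * Real.exp (-a ^ 2 / (2 * v)) := by
  have hS : 0 < Real.sqrt (2 * π * v) := by
    apply Real.sqrt_pos.2; positivity
  have key := aux_int_x_exp (v : ℝ) a hv ha.le
  have hint := aux_int_x_exp_integrable (v : ℝ) a hv ha.le
  have step1 : ∫ x in Set.Ioi a, gaussianPDFReal 0 v x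
      ≤ ∫ x in Set.Ioi a, (a * Real.sqrt (2 * π * v))⁻¹ * (x * Real.exp (-x ^ 2 / (2 * v))) := by
    apply setIntegral_mono_on
    · exact (integrable_gaussianPDFReal 0 v).restrict
    · exact hint.const_mul _
    · exact measurableSet_Ioi
    · intro x hx
      have hx' : a < x := hx
      have hxpos : 0 < x := lt_trans ha hx'
      have hE : 0 < Real.exp (-x ^ 2 / (2 * v)) := Real.exp_pos _
      have heq : (a * Real.sqrt (2 * π * v))⁻¹ * (x * Real.exp (-x ^ 2 / (2 * v)))
          = (x / a) * ((Real.sqrt (2 * π * v))⁻¹ * Real.exp (-x ^ 2 / (2 * v))) := by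
        field_simp
      rw [heq]
      have hpdf : gaussianPDFReal 0 v x
          = (Real.sqrt (2 * π * v))⁻¹ * Real.exp (-x ^ 2 / (2 * v)) := by
        simp [gaussianPDFReal]
      rw [hpdf]
      have h1 : (1 : ℝ) ≤ x / a := (one_le_div ha).2 hx'.le
      nlinarith [mul_pos (inv_pos.2 hS) hE]
  rw [integral_const_mul, key] at step1
  calc ∫ x in Set.Ioi a, gaussianPDFReal 0 v x
      ≤ (a * Real.sqrt (2 * π * v))⁻¹ * ((v : ℝ) * Real.exp (-a ^ 2 / (2 * v))) := step1
    _ = (v : ℝ) / (a * Real.sqrt (2 * π * v)) * Real.exp (-a ^ 2 / (2 * v)) := by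
        field_simp

theorem stmt11 (T I : ℕ) (hI : 0 < I)
    (γ ξ : Fin T → ℝ) (hγ : ∀ t, 0 < γ t) (hξ : ∀ t, 0 < ξ t)
    (η : Fin T → Fin I → ℝ) (hη : ∀ t i, 0 < η t i)
    (ε δ : ℝ) (hε : 0 < ε) (hδ0 : 0 < δ) (hδ1 : δ ≤ 1)
    (Cinv : ℝ → ℝ)
    (hCinv : ∀ y : ℝ, 0 < y →
      0 < Cinv y ∧ Real.sqrt π * Cinv y * Real.exp (Cinv y ^ 2) = y)
    (v2 : ℝ)
    (hv2 : v2 = ∑ t, (2 * γ t ^ 2 / ξ t) *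
        Finset.univ.sup' ⟨⟨0, hI⟩, Finset.mem_univ _⟩ (η t))
    (hR : 2 * v2 ≤ (Real.sqrt (ε + Cinv (1 / δ) ^ 2) - Cinv (1 / δ)) ^ 2) :
    Cinv (1 / δ) * Real.sqrt v2 ≤ ε / 2 - v2 ∧
    gaussianReal 0 v2.toNNReal {x | ε < |2 * x + 2 * v2|} ≤ ENNReal.ofReal δ := by
  obtain ⟨hc, hcC⟩ := hCinv (1 / δ) (one_div_pos.mpr hδ0)
  set c := Cinv (1 / δ) with hcdef
  -- v2 is nonnegative
  have hv2nn : 0 ≤ v2 := by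
    rw [hv2]
    apply Finset.sum_nonneg
    intro t _
    have h1 : (0 : ℝ) ≤ 2 * γ t ^ 2 / ξ t := div_nonneg (by positivity) (hξ t).le
    have h2 : η t ⟨0, hI⟩ ≤ Finset.univ.sup' ⟨⟨0, hI⟩, Finset.mem_univ _⟩ (η t) :=
      Finset.le_sup' _ (Finset.mem_univ _)
    have h3 : (0 : ℝ) ≤ Finset.univ.sup' ⟨⟨0, hI⟩, Finset.mem_univ _⟩ (η t) :=
      le_trans (hη t ⟨0, hI⟩).le h2
    exact mul_nonneg h1 h3
  -- the key inequality
  have hs : c ≤ Real.sqrt (ε + c ^ 2) := by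
    have h := Real.sqrt_le_sqrt (show c ^ 2 ≤ ε + c ^ 2 by linarith)
    rwa [Real.sqrt_sq hc.le] at h
  have h2v : Real.sqrt (2 * v2) ≤ Real.sqrt (ε + c ^ 2) - c := by
    have h := Real.sqrt_le_sqrt hR
    rwa [Real.sqrt_sq (by linarith)] at h
  have hsqnn : 0 ≤ Real.sqrt (2 * v2) := Real.sqrt_nonneg _
  have hsq2 : Real.sqrt (2 * v2) ^ 2 = 2 * v2 := Real.sq_sqrt (by linarith)
  have hsq3 : Real.sqrt (ε + c ^ 2) ^ 2 = ε + c ^ 2 := Real.sq_sqrt (by nlinarith)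
  have hkey : c * Real.sqrt (2 * v2) ≤ ε / 2 - v2 := by
    have h3 : (Real.sqrt (2 * v2) + c) ^ 2 ≤ Real.sqrt (ε + c ^ 2) ^ 2 := by
      apply pow_le_pow_left₀ (by positivity) (by linarith)
    rw [hsq3] at h3
    nlinarith [h3, hsq2]
  constructor
  · -- part 1
    have hmono : Real.sqrt v2 ≤ Real.sqrt (2 * v2) := Real.sqrt_le_sqrt (by linarith)
    have := mul_le_mul_of_nonneg_left hmono hc.le
    linarith
  · -- part 2
    rcases eq_or_lt_of_le hv2nn with hzero | hpos
    · -- degenerate case v2 = 0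
      have hz : v2 = 0 := hzero.symm
      have h0 : v2.toNNReal = 0 := by simp [hz]
      rw [h0, hz, gaussianReal_zero_var]
      have hms : MeasurableSet {x : ℝ | ε < |2 * x + 2 * 0|} :=
        measurableSet_lt measurable_const (by fun_prop)
      rw [MeasureTheory.Measure.dirac_apply' _ hms]
      have : (0 : ℝ) ∉ {x : ℝ | ε < |2 * x + 2 * 0|} := by
        simp [abs_of_nonneg]
        linarith
      rw [Set.indicator_of_notMem this]
      exact zero_le
    · -- main case v2 > 0
      set v : NNReal := v2.toNNReal with hvdef
      have hvc : ((v : NNReal) : ℝ) = v2 := Real.coe_toNNReal _ hv2nn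
      have hvpos : 0 < ((v : NNReal) : ℝ) := by rw [hvc]; exact hpos
      have hvne : v ≠ 0 := by
        intro h
        rw [h] at hvc
        simp at hvc
        linarith
      set a := ε / 2 - v2 with hadef
      have hsqpos : 0 < Real.sqrt (2 * v2) := Real.sqrt_pos.2 (by linarith)
      have ha : 0 < a := lt_of_lt_of_le (mul_pos hc hsqpos) hkey
      -- set inclusion
      have hsub : {x : ℝ | ε < |2 * x + 2 * v2|} ⊆ Set.Ioi a ∪ Set.Iio (-a) := by
        intro x hx
        have hx' : ε < |2 * x + 2 * v2| := hx
        rcases lt_abs.1 hx' with h | h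
        · left; show a < x; simp only [hadef]; linarith
        · right; show x < -a; simp only [hadef]; linarith
      have hIn : 0 ≤ ∫ x in Set.Ioi a, gaussianPDFReal 0 v x :=
        setIntegral_nonneg measurableSet_Ioi (fun x _ => gaussianPDFReal_nonneg 0 v x)
      -- the left tail equals the right tail
      have hsym : ∫ x in Set.Iio (-a), gaussianPDFReal 0 v x
          = ∫ x in Set.Ioi a, gaussianPDFReal 0 v x := by
        rw [← MeasureTheory.integral_Iic_eq_integral_Iio, ← integral_comp_neg_Ioi]
        apply setIntegral_congr_fun measurableSet_Ioi
        intro x _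
        simp [gaussianPDFReal, neg_sq]
      -- measure bound
      have hmeas : gaussianReal 0 v {x | ε < |2 * x + 2 * v2|}
          ≤ ENNReal.ofReal ((∫ x in Set.Ioi a, gaussianPDFReal 0 v x)
            + (∫ x in Set.Ioi a, gaussianPDFReal 0 v x)) := by
        calc gaussianReal 0 v {x | ε < |2 * x + 2 * v2|}
            ≤ gaussianReal 0 v (Set.Ioi a ∪ Set.Iio (-a)) := measure_mono hsub
          _ ≤ gaussianReal 0 v (Set.Ioi a) + gaussianReal 0 v (Set.Iio (-a)) :=
              measure_union_le _ _
          _ = ENNReal.ofReal (∫ x in Set.Ioi a, gaussianPDFReal 0 v x)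
              + ENNReal.ofReal (∫ x in Set.Iio (-a), gaussianPDFReal 0 v x) := by
              rw [gaussianReal_apply_eq_integral _ hvne, gaussianReal_apply_eq_integral _ hvne]
          _ = ENNReal.ofReal ((∫ x in Set.Ioi a, gaussianPDFReal 0 v x)
              + (∫ x in Set.Ioi a, gaussianPDFReal 0 v x)) := by
              rw [hsym, ENNReal.ofReal_add hIn hIn]
      -- numeric bound
      have htail := aux_gauss_tail v hvpos a ha
      rw [hvc] at htail
      set s2 := Real.sqrt (2 * π * v2) with hs2def
      have hs2pos : 0 < s2 := Real.sqrt_pos.2 (by positivity)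
      have hprod : Real.sqrt (2 * v2) * s2 = 2 * v2 * Real.sqrt π := by
        rw [hs2def, ← Real.sqrt_mul (by linarith)]
        rw [show (2 * v2) * (2 * π * v2) = (2 * v2) ^ 2 * π by ring]
        rw [Real.sqrt_mul (sq_nonneg _), Real.sqrt_sq (by linarith)]
      have hπ : 0 < Real.sqrt π := Real.sqrt_pos.2 Real.pi_pos
      have has2 : v2 * (2 * c * Real.sqrt π) ≤ a * s2 := by
        have h1 : c * Real.sqrt (2 * v2) * s2 ≤ a * s2 :=
          mul_le_mul_of_nonneg_right hkey hs2pos.le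
        calc v2 * (2 * c * Real.sqrt π) = c * (Real.sqrt (2 * v2) * s2) := by
              rw [hprod]; ring
          _ = c * Real.sqrt (2 * v2) * s2 := by ring
          _ ≤ a * s2 := h1
      have hfrac : v2 / (a * s2) ≤ 1 / (2 * c * Real.sqrt π) := by
        rw [div_le_div_iff₀ (by positivity) (by positivity)]
        linarith
      have hexp : Real.exp (-a ^ 2 / (2 * v2)) * Real.exp (c ^ 2) ≤ 1 := by
        rw [← Real.exp_add, ← Real.exp_zero]
        apply Real.exp_le_exp.2
        have ha2 : c ^ 2 * (2 * v2) ≤ a ^ 2 := by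
          nlinarith [hkey, hsq2, mul_pos hc hsqpos]
        have h5 : c ^ 2 ≤ a ^ 2 / (2 * v2) := (le_div_iff₀ (by linarith)).2 ha2
        rw [neg_div]
        linarith
      have hfinal : (∫ x in Set.Ioi a, gaussianPDFReal 0 v x)
          + (∫ x in Set.Ioi a, gaussianPDFReal 0 v x) ≤ δ := by
        have hB : (∫ x in Set.Ioi a, gaussianPDFReal 0 v x)
            ≤ v2 / (a * s2) * Real.exp (-a ^ 2 / (2 * v2)) := htail
        have hP : 0 < Real.sqrt π * c * Real.exp (c ^ 2) := by positivity
        have hδeq : δ = 1 / (Real.sqrt π * c * Real.exp (c ^ 2)) := by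
          rw [hcC]
          field_simp
        have h5 : v2 / (a * s2) * (Real.exp (-a ^ 2 / (2 * v2)) * Real.exp (c ^ 2))
            ≤ 1 / (2 * c * Real.sqrt π) * 1 :=
          mul_le_mul hfrac hexp (by positivity) (by positivity)
        have h7 := mul_le_mul_of_nonneg_left h5
          (show (0 : ℝ) ≤ 2 * c * Real.sqrt π by positivity)
        have h6 : (2 * c * Real.sqrt π) * (1 / (2 * c * Real.sqrt π) * 1) = 1 := by
          field_simp
        have h8 : 2 * (v2 / (a * s2)) * Real.exp (-a ^ 2 / (2 * v2))
            * (Real.sqrt π * c * Real.exp (c ^ 2)) ≤ 1 := by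
          calc 2 * (v2 / (a * s2)) * Real.exp (-a ^ 2 / (2 * v2))
              * (Real.sqrt π * c * Real.exp (c ^ 2))
              = (2 * c * Real.sqrt π) * (v2 / (a * s2)
                * (Real.exp (-a ^ 2 / (2 * v2)) * Real.exp (c ^ 2))) := by ring
            _ ≤ (2 * c * Real.sqrt π) * (1 / (2 * c * Real.sqrt π) * 1) := h7
            _ = 1 := h6
        have h9 : 2 * (v2 / (a * s2) * Real.exp (-a ^ 2 / (2 * v2))) ≤ δ := by
          rw [hδeq, le_div_iff₀ hP]
          calc 2 * (v2 / (a * s2) * Real.exp (-a ^ 2 / (2 * v2)))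
              * (Real.sqrt π * c * Real.exp (c ^ 2))
              = 2 * (v2 / (a * s2)) * Real.exp (-a ^ 2 / (2 * v2))
                * (Real.sqrt π * c * Real.exp (c ^ 2)) := by ring
            _ ≤ 1 := h8
        linarith
      exact le_trans hmeas (ENNReal.ofReal_le_ofReal hfinal)
end

section
/- (Optimality of zero artificial noise) In the convex program minimizing Σ_t (1 − μ/L)^{−t}(Σ_{k,i} a_{k,t}^i + N₀ Σ_i b_t^i) subject to c_t^i ≤ Σ_k a_{k,t}^i + N₀ b_t^i, D²ζ²_{k,t}(i) + e·a_{k,t}^i ≤ P₀|h_{k,t}(i)|² b_t^i, d_t ≤ c_t^i, Σ_t 4γ_t²/d_t ≤ R, and nonnegativity, an optimal solution has a_{k,t}^i = 0 for all k, i, t. -/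
/-- Feasibility for the change-of-variables form of problem P₁:
`a t k i` is artificial-noise power, `b t i` the inverse power scalar,
`c t i = ξ_t / η_t(i)`, `dd t = ξ_t / max_i η_t(i)`. -/
def Feasible16 {T K I : ℕ} (N₀ D P₀ e' R : ℝ)
    (ζ hsq : Fin T → Fin K → Fin I → ℝ) (γ : Fin T → ℝ)
    (a : Fin T → Fin K → Fin I → ℝ) (b c : Fin T → Fin I → ℝ)
    (dd : Fin T → ℝ) : Prop :=
  (∀ t k i, 0 ≤ a t k i) ∧ (∀ t i, 0 < b t i) ∧ (∀ t i, 0 < c t i) ∧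
  (∀ t, 0 < dd t) ∧
  (∀ t i, c t i ≤ ∑ k, a t k i + N₀ * b t i) ∧
  (∀ t k i, D ^ 2 * ζ t k i ^ 2 + e' * a t k i ≤ P₀ * hsq t k i * b t i) ∧
  (∀ t i, dd t ≤ c t i) ∧
  (∑ t, 4 * γ t ^ 2 / dd t ≤ R)

/-- Objective of the change-of-variables form of problem P₁. -/
noncomputable def Obj16 {T K I : ℕ} (μ L N₀ : ℝ)
    (a : Fin T → Fin K → Fin I → ℝ) (b : Fin T → Fin I → ℝ) : ℝ :=
  ∑ t, ((1 - μ / L)⁻¹) ^ (t.val + 1) * (∑ k, ∑ i, a t k i + N₀ * ∑ i, b t i)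

theorem stmt16 {T K I : ℕ} (μ L N₀ D P₀ e' R : ℝ)
    (hμ : 0 < μ) (hμL : μ ≤ L) (hN₀ : 0 < N₀) (hD : 0 < D) (hP₀ : 0 < P₀)
    (he' : 0 < e') (hR : 0 < R)
    (ζ hsq : Fin T → Fin K → Fin I → ℝ)
    (hζ : ∀ t k i, 0 < ζ t k i) (hhsq : ∀ t k i, 0 < hsq t k i)
    (γ : Fin T → ℝ) (hγ : ∀ t, 0 < γ t)
    (a : Fin T → Fin K → Fin I → ℝ) (b c : Fin T → Fin I → ℝ) (dd : Fin T → ℝ)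
    (hfeas : Feasible16 N₀ D P₀ e' R ζ hsq γ a b c dd) :
    ∃ (b' c' : Fin T → Fin I → ℝ) (dd' : Fin T → ℝ),
      Feasible16 N₀ D P₀ e' R ζ hsq γ (fun _ _ _ => (0:ℝ)) b' c' dd' ∧
      Obj16 μ L N₀ (fun (_ : Fin T) (_ : Fin K) (_ : Fin I) => (0:ℝ)) b' ≤ Obj16 μ L N₀ a b := by
  obtain ⟨ha, hb, hc, hdd, hc1, hc2, hc3, hc4⟩ := hfeas
  refine ⟨fun t i => b t i + (∑ k, a t k i) / N₀, c, dd, ⟨?_, ?_, hc, hdd, ?_, ?_, hc3, hc4⟩, ?_⟩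
  · exact fun t k i => le_refl 0
  · intro t i
    have : 0 ≤ (∑ k, a t k i) / N₀ :=
      div_nonneg (Finset.sum_nonneg fun k _ => ha t k i) hN₀.le
    linarith [hb t i]
  · intro t i
    have h := hc1 t i
    have : N₀ * (b t i + (∑ k, a t k i) / N₀) = N₀ * b t i + ∑ k, a t k i := by
      field_simp
    simp only [this]
    simp only [Finset.sum_const_zero, zero_add]
    linarith
  · intro t k i
    have h := hc2 t k i
    have h1 : 0 ≤ e' * a t k i := mul_nonneg he'.le (ha t k i)
    have h2 : 0 ≤ (∑ k, a t k i) / N₀ :=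
      div_nonneg (Finset.sum_nonneg fun k _ => ha t k i) hN₀.le
    have h3 : 0 ≤ P₀ * hsq t k i * ((∑ k, a t k i) / N₀) :=
      mul_nonneg (mul_nonneg hP₀.le (hhsq t k i).le) h2
    nlinarith
  · unfold Obj16
    apply le_of_eq
    apply Finset.sum_congr rfl
    intro t _
    congr 1
    have hswap : ∑ k, ∑ i, a t k i = ∑ i, ∑ k, a t k i := Finset.sum_comm
    have : ∑ i, (b t i + (∑ k, a t k i) / N₀) = ∑ i, b t i + (∑ i, ∑ k, a t k i) / N₀ := by
      rw [Finset.sum_add_distrib, ← Finset.sum_div]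
    rw [this, hswap]
    field_simp
    simp only [Finset.sum_const_zero, zero_add]
    ring
end
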